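/- Let t(y) = p⁻¹ + Σ_{i≥1} H_i p^i and t(z) = q⁻¹ + Σ_{i≥1} H_i q^i be two copies of the same formal Laurent series in variables p, q. Define the double series Σ_{m,n≥1} H_{m,n} p^n q^m as the expansion of Σ_{i≥1}(1/i)(p/q)^i − log((p⁻¹ − q⁻¹ + Σ_{i≥1} H_i(p^i − q^i))/(p⁻¹ − q⁻¹)) (equivalently, of −log p − log(t(y)−t(z)) after removing the divergent part). Then H_{m,n} = H_{n,m} for all positive integers m, n. -/

import Mathlib

open MvPowerSeries

/-- Abbreviations for the two variables `p`, `q` of our two-variable power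
series: `X0` plays the role of `p` and `X1` that of `q`. -/
noncomputable def X0 : MvPowerSeries (Fin 2) ℚ := MvPowerSeries.X 0
noncomputable def X1 : MvPowerSeries (Fin 2) ℚ := MvPowerSeries.X 1

/-- The coefficient of `p^n q^m` in `−log(1−u) = Σ_{k≥1} u^k/k`.  Since `u`
(below) has vanishing terms in total degree `< 2`, only `k ≤ m+n` contribute,
so the sum may be truncated.  This is the double coefficient `H_{m,n}` of the
expansion `Σ_{i≥1}(1/i)(p/q)^i − log((p⁻¹−q⁻¹+Σ H_i(p^i−q^i))/(p⁻¹−q⁻¹))`,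
i.e. of `−log p − log(t(y)−t(z))` with the divergent part removed. -/
noncomputable def doubleCoeff (u : MvPowerSeries (Fin 2) ℚ) (m n : ℕ) : ℚ :=
  ∑ k ∈ Finset.Icc 1 (m + n),
    (1 / k : ℚ) *
      MvPowerSeries.coeff (Finsupp.single 0 n + Finsupp.single 1 m) (u ^ k)

/-- Swap of exponents, as an additive equivalence. -/
noncomputable def swapE : (Fin 2 →₀ ℕ) ≃+ (Fin 2 →₀ ℕ) :=
  Finsupp.domCongr (Equiv.swap 0 1)

@[simp] lemma swapE_apply_zero (e : Fin 2 →₀ ℕ) : swapE e 0 = e 1 := by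
  simp [swapE, Finsupp.domCongr_apply, Finsupp.equivMapDomain_apply]

@[simp] lemma swapE_apply_one (e : Fin 2 →₀ ℕ) : swapE e 1 = e 0 := by
  simp [swapE, Finsupp.domCongr_apply, Finsupp.equivMapDomain_apply]

lemma swapE_single0 (n : ℕ) : swapE (Finsupp.single 0 n) = Finsupp.single 1 n := by
  simp [swapE, Finsupp.domCongr_apply, Finsupp.equivMapDomain_single]

lemma swapE_single1 (n : ℕ) : swapE (Finsupp.single 1 n) = Finsupp.single 0 n := by
  simp [swapE, Finsupp.domCongr_apply, Finsupp.equivMapDomain_single]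

lemma swapE_swapE (e : Fin 2 →₀ ℕ) : swapE (swapE e) = e := by
  ext a
  fin_cases a <;> simp

lemma swapE_eq_iff (e f : Fin 2 →₀ ℕ) : swapE e = f ↔ e = swapE f := by
  constructor
  · intro h; rw [← h, swapE_swapE]
  · intro h; rw [h, swapE_swapE]

/-- Swap of variables of a two-variable power series. -/
noncomputable def sw (f : MvPowerSeries (Fin 2) ℚ) : MvPowerSeries (Fin 2) ℚ :=
  fun e => f (swapE e)

lemma coeff_sw (f : MvPowerSeries (Fin 2) ℚ) (e : Fin 2 →₀ ℕ) :
    MvPowerSeries.coeff e (sw f) = MvPowerSeries.coeff (swapE e) f := rfl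

lemma sw_sub (f g : MvPowerSeries (Fin 2) ℚ) : sw (f - g) = sw f - sw g := rfl

lemma sw_one : sw (1 : MvPowerSeries (Fin 2) ℚ) = 1 := by
  ext e
  rw [coeff_sw, MvPowerSeries.coeff_one, MvPowerSeries.coeff_one]
  simp [AddEquivClass.map_eq_zero_iff]

lemma sw_mul (f g : MvPowerSeries (Fin 2) ℚ) : sw (f * g) = sw f * sw g := by
  ext e
  rw [coeff_sw, MvPowerSeries.coeff_mul, MvPowerSeries.coeff_mul]
  refine Finset.sum_nbij' (fun p => (swapE p.1, swapE p.2))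
    (fun p => (swapE p.1, swapE p.2)) ?_ ?_ ?_ ?_ ?_
  · intro p hp
    rw [Finset.HasAntidiagonal.mem_antidiagonal] at hp ⊢
    rw [← map_add, hp, swapE_swapE]
  · intro p hp
    rw [Finset.HasAntidiagonal.mem_antidiagonal] at hp ⊢
    rw [← map_add, hp]
  · intro p _; simp [swapE_swapE]
  · intro p _; simp [swapE_swapE]
  · intro p _
    rw [coeff_sw, coeff_sw]
    simp [swapE_swapE]

lemma sw_pow (f : MvPowerSeries (Fin 2) ℚ) (k : ℕ) : sw (f ^ k) = sw f ^ k := by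
  induction k with
  | zero => simpa using sw_one
  | succ n ih => rw [pow_succ, pow_succ, sw_mul, ih]

lemma sw_X0 : sw X0 = X1 := by
  classical
  ext e
  rw [coeff_sw, X0, X1, MvPowerSeries.coeff_X, MvPowerSeries.coeff_X]
  congr 1
  simp only [eq_iff_iff]
  rw [swapE_eq_iff, swapE_single0]

lemma sw_X1 : sw X1 = X0 := by
  classical
  ext e
  rw [coeff_sw, X0, X1, MvPowerSeries.coeff_X, MvPowerSeries.coeff_X]
  congr 1
  simp only [eq_iff_iff]
  rw [swapE_eq_iff, swapE_single1]

lemma X1_sub_X0_ne_zero : X1 - X0 ≠ 0 := by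
  classical
  intro h
  have := congrArg (MvPowerSeries.coeff (Finsupp.single 1 1)) h
  rw [map_sub, X0, X1, MvPowerSeries.coeff_X, MvPowerSeries.coeff_X] at this
  have h01 : (Finsupp.single 1 1 : Fin 2 →₀ ℕ) ≠ Finsupp.single 0 1 := by
    intro hh
    have := congrArg (fun f : Fin 2 →₀ ℕ => f 1) hh
    simp at this
  simp [h01] at this

theorem double_coeff_symm (H : ℕ → ℚ) (u : MvPowerSeries (Fin 2) ℚ)
    (hu : ∀ e : Fin 2 →₀ ℕ,
      MvPowerSeries.coeff e ((X1 - X0) * (1 - u)) =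
        MvPowerSeries.coeff e (X1 - X0) +
          (if e 1 = 1 ∧ 2 ≤ e 0 then H (e 0) else 0) -
          (if e 0 = 1 ∧ 2 ≤ e 1 then H (e 1) else 0)) :
    ∀ m n : ℕ, 1 ≤ m → 1 ≤ n → doubleCoeff u m n = doubleCoeff u n m := by
  classical
  -- the swap of X1 - X0 is its negative
  have hXswap : ∀ e : Fin 2 →₀ ℕ,
      MvPowerSeries.coeff (swapE e) (X1 - X0) =
        -MvPowerSeries.coeff e (X1 - X0) := by
    intro e
    rw [map_sub, map_sub, X0, X1, MvPowerSeries.coeff_X, MvPowerSeries.coeff_X,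
      MvPowerSeries.coeff_X, MvPowerSeries.coeff_X]
    have h1 : swapE e = Finsupp.single 1 1 ↔ e = Finsupp.single 0 1 := by
      rw [swapE_eq_iff, swapE_single1]
    have h2 : swapE e = Finsupp.single 0 1 ↔ e = Finsupp.single 1 1 := by
      rw [swapE_eq_iff, swapE_single0]
    rw [if_congr h1 rfl rfl, if_congr h2 rfl rfl]
    ring
  -- swapping the product negates it
  have hP : sw ((X1 - X0) * (1 - u)) = -((X1 - X0) * (1 - u)) := by
    ext e
    rw [coeff_sw, map_neg, hu (swapE e), hu e, hXswap]
    simp only [swapE_apply_zero, swapE_apply_one]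
    ring
  -- compute the swap of the product directly
  have hP' : sw ((X1 - X0) * (1 - u)) = (X0 - X1) * (1 - sw u) := by
    rw [sw_mul, sw_sub, sw_sub, sw_one, sw_X0, sw_X1]
  have hcancel : (X1 - X0) * (1 - sw u) = (X1 - X0) * (1 - u) := by
    have : (X0 - X1) * (1 - sw u) = -((X1 - X0) * (1 - u)) := by
      rw [← hP', hP]
    have h2 : -((X1 - X0) * (1 - sw u)) = -((X1 - X0) * (1 - u)) := by
      rw [← this]; ring
    exact neg_injective h2
  have husym : sw u = u := by
    have h := mul_left_cancel₀ X1_sub_X0_ne_zero hcancel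
    linear_combination -h
  -- hence all powers of u have symmetric coefficients
  intro m n hm hn
  unfold doubleCoeff
  rw [add_comm n m]
  refine Finset.sum_congr rfl fun k _ => ?_
  congr 1
  have : MvPowerSeries.coeff (Finsupp.single 0 n + Finsupp.single 1 m) (u ^ k)
      = MvPowerSeries.coeff (swapE (Finsupp.single 0 n + Finsupp.single 1 m)) (u ^ k) := by
    rw [← coeff_sw, sw_pow, husym]
  rw [this, map_add, swapE_single0, swapE_single1, add_comm]
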